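/- Let C be an algebraic circuit with gates u and w, and suppose some proof-tree rooted at u contains w on its rightmost path. Then Var(u:w) + Var(w) ≤ Var(u) coordinatewise, where Var(u) ∈ ℕ^n is the vector whose i-th entry is the maximum x_i-degree over all proof-trees rooted at u, and Var(u:w) is the analogous vector over all w-snipped proof-trees rooted at u. -/

import Mathlib

/-- A gate of an algebraic circuit: a variable leaf, a constant leaf, a fan-in-two
addition gate, or a fan-in-two multiplication gate (children given by gate indices). -/
inductive GateDef (F : Type) (n : ℕ) where
  | var (i : Fin n)
  | const (a : F)
  | add (l r : ℕ)
  | mul (l r : ℕ)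

/-- An algebraic circuit over the field `F` in variables `x_0, ..., x_{n-1}`: a DAG whose
gates are indexed by natural numbers, children of a gate having strictly smaller index. -/
structure Circuit (F : Type) (n : ℕ) where
  size : ℕ
  gate : ℕ → GateDef F n
  addAcyclic : ∀ g l r, gate g = GateDef.add l r → l < g ∧ r < g
  mulAcyclic : ∀ g l r, gate g = GateDef.mul l r → l < g ∧ r < g

namespace Circuit

variable {F : Type} [Field F] {n : ℕ}

/-- `[u]`, the polynomial computed at gate `u`. -/
noncomputable def eval (Γ : Circuit F n) : ℕ → MvPolynomial (Fin n) F
  | u => match h : Γ.gate u with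
    | GateDef.var i => MvPolynomial.X i
    | GateDef.const a => MvPolynomial.C a
    | GateDef.add l r =>
        have := Γ.addAcyclic u l r h
        Γ.eval l + Γ.eval r
    | GateDef.mul l r =>
        have := Γ.mulAcyclic u l r h
        Γ.eval l * Γ.eval r
termination_by u => u
decreasing_by
  · exact this.1
  · exact this.2
  · exact this.1
  · exact this.2

/-- The multiset of values of all proof-trees rooted at `u`: a proof-tree contains both
children of each product gate it contains and exactly one child of each addition gate it
contains, and its value is the monomial it computes. -/
noncomputable def ptVals (Γ : Circuit F n) : ℕ → Multiset (MvPolynomial (Fin n) F)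
  | u => match h : Γ.gate u with
    | GateDef.var i => {MvPolynomial.X i}
    | GateDef.const a => {MvPolynomial.C a}
    | GateDef.add l r =>
        have := Γ.addAcyclic u l r h
        Γ.ptVals l + Γ.ptVals r
    | GateDef.mul l r =>
        have := Γ.mulAcyclic u l r h
        ((Γ.ptVals l).product (Γ.ptVals r)).map (fun p => p.1 * p.2)
termination_by u => u
decreasing_by
  · exact this.1
  · exact this.2
  · exact this.1
  · exact this.2

/-- The gate quotient `[u : v]`. -/
noncomputable def quot (Γ : Circuit F n) : ℕ → ℕ → MvPolynomial (Fin n) F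
  | u, v =>
    if u = v then 1
    else match h : Γ.gate u with
      | GateDef.var _ => 0
      | GateDef.const _ => 0
      | GateDef.add l r =>
          have := Γ.addAcyclic u l r h
          Γ.quot l v + Γ.quot r v
      | GateDef.mul l r =>
          have := Γ.mulAcyclic u l r h
          Γ.eval l * Γ.quot r v
termination_by u v => u
decreasing_by
  · exact this.1
  · exact this.2
  · exact this.2

/-- The multiset of values of all `v`-snipped proof-trees rooted at `u`: proof-trees with
`v` on their rightmost path, with that occurrence of `v` replaced by a leaf labelled `1`. -/
noncomputable def sptVals (Γ : Circuit F n) : ℕ → ℕ → Multiset (MvPolynomial (Fin n) F)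
  | u, v =>
    if u = v then {1}
    else match h : Γ.gate u with
      | GateDef.var _ => 0
      | GateDef.const _ => 0
      | GateDef.add l r =>
          have := Γ.addAcyclic u l r h
          Γ.sptVals l v + Γ.sptVals r v
      | GateDef.mul l r =>
          have := Γ.mulAcyclic u l r h
          ((Γ.ptVals l).product (Γ.sptVals r v)).map (fun p => p.1 * p.2)
termination_by u v => u
decreasing_by
  · exact this.1
  · exact this.2
  · exact this.2

/-- The multiset of individual-degree vectors of all proof-trees rooted at `u`. -/
def ptDegs (Γ : Circuit F n) : ℕ → Multiset (Fin n → ℕ)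
  | u => match h : Γ.gate u with
    | GateDef.var i => {fun j => if j = i then 1 else 0}
    | GateDef.const _ => {(0 : Fin n → ℕ)}
    | GateDef.add l r =>
        have := Γ.addAcyclic u l r h
        Γ.ptDegs l + Γ.ptDegs r
    | GateDef.mul l r =>
        have := Γ.mulAcyclic u l r h
        ((Γ.ptDegs l).product (Γ.ptDegs r)).map (fun p => p.1 + p.2)
termination_by u => u
decreasing_by
  · exact this.1
  · exact this.2
  · exact this.1
  · exact this.2

/-- The multiset of individual-degree vectors of all `v`-snipped proof-trees rooted at `u`. -/
def sptDegs (Γ : Circuit F n) : ℕ → ℕ → Multiset (Fin n → ℕ)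
  | u, v =>
    if u = v then {(0 : Fin n → ℕ)}
    else match h : Γ.gate u with
      | GateDef.var _ => 0
      | GateDef.const _ => 0
      | GateDef.add l r =>
          have := Γ.addAcyclic u l r h
          Γ.sptDegs l v + Γ.sptDegs r v
      | GateDef.mul l r =>
          have := Γ.mulAcyclic u l r h
          ((Γ.ptDegs l).product (Γ.sptDegs r v)).map (fun p => p.1 + p.2)
termination_by u v => u
decreasing_by
  · exact this.1
  · exact this.2
  · exact this.2

/-- `Var(u)`: the coordinatewise maximum individual-degree vector over all proof-trees
rooted at `u`. -/
def varV (Γ : Circuit F n) (u : ℕ) : Fin n → ℕ :=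
  fun i => ((Γ.ptDegs u).map (fun d => d i)).sup

/-- `Var(u : v)`: the coordinatewise maximum individual-degree vector over all
`v`-snipped proof-trees rooted at `u`. -/
def varQ (Γ : Circuit F n) (u v : ℕ) : Fin n → ℕ :=
  fun i => ((Γ.sptDegs u v).map (fun d => d i)).sup

/-- `|d|`: the sum of the coordinates of a degree vector. -/
def tot {n : ℕ} (d : Fin n → ℕ) : ℕ := ∑ i : Fin n, d i

end Circuit

/-- If some proof-tree rooted at `u` contains `w` on its rightmost path
(equivalently, there exists a `w`-snipped proof-tree rooted at `u`), then
`Var(u : w) + Var(w) ≤ Var(u)` coordinatewise. -/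
private lemma Multiset.exists_eq_sup (s : Multiset ℕ) (hs : s ≠ 0) :
    ∃ a ∈ s, s.sup = a := by
  induction s using Multiset.induction with
  | empty => exact absurd rfl hs
  | cons a s ih =>
      rcases eq_or_ne s 0 with rfl | h0
      · exact ⟨a, by simp⟩
      · obtain ⟨b, hb, hsup⟩ := ih h0
        rcases le_total a b with hab | hab
        · exact ⟨b, Multiset.mem_cons_of_mem hb, by simp [hsup, sup_eq_right.2 hab]⟩
        · exact ⟨a, Multiset.mem_cons_self a s, by simp [hsup, sup_eq_left.2 hab]⟩

private lemma Circuit.ptDegs_add_eq {F : Type} [Field F] {n : ℕ}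
    (Γ : Circuit F n) {u l r : ℕ} (h : Γ.gate u = GateDef.add l r) :
    Γ.ptDegs u = Γ.ptDegs l + Γ.ptDegs r := by
  rw [Circuit.ptDegs]
  split <;> rename_i h' <;> rw [h] at h' <;> cases h' <;> rfl

private lemma Circuit.ptDegs_mul_eq {F : Type} [Field F] {n : ℕ}
    (Γ : Circuit F n) {u l r : ℕ} (h : Γ.gate u = GateDef.mul l r) :
    Γ.ptDegs u = ((Γ.ptDegs l).product (Γ.ptDegs r)).map (fun p => p.1 + p.2) := by
  rw [Circuit.ptDegs]
  split <;> rename_i h' <;> rw [h] at h' <;> cases h' <;> rfl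

private lemma Circuit.ptDegs_ne_zero {F : Type} [Field F] {n : ℕ}
    (Γ : Circuit F n) (u : ℕ) : Γ.ptDegs u ≠ 0 := by
  induction u using Nat.strong_induction_on with
  | _ u ih =>
    rw [Circuit.ptDegs]
    split
    · simp
    · simp
    · rename_i l r h
      have hlr := Γ.addAcyclic u l r h
      have h1 := Multiset.card_pos.2 (ih l hlr.1)
      rw [Ne, ← Multiset.card_eq_zero, Multiset.card_add]
      omega
    · rename_i l r h
      have hlr := Γ.mulAcyclic u l r h
      obtain ⟨d, hd⟩ := Multiset.exists_mem_of_ne_zero (ih l hlr.1)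
      obtain ⟨e, he⟩ := Multiset.exists_mem_of_ne_zero (ih r hlr.2)
      intro hc
      rw [Multiset.eq_zero_iff_forall_notMem] at hc
      exact hc (d + e) (Multiset.mem_map.2 ⟨(d, e), Multiset.mem_product.2 ⟨hd, he⟩, rfl⟩)

private lemma Circuit.add_mem_ptDegs {F : Type} [Field F] {n : ℕ}
    (Γ : Circuit F n) (w : ℕ) : ∀ u, ∀ d ∈ Γ.sptDegs u w, ∀ e ∈ Γ.ptDegs w,
    d + e ∈ Γ.ptDegs u := by
  intro u
  induction u using Nat.strong_induction_on with
  | _ u ih =>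
    intro d hd e he
    rw [Circuit.sptDegs] at hd
    split at hd
    · rename_i huw
      subst huw
      simp at hd
      subst hd
      simpa using he
    · split at hd
      · simp at hd
      · simp at hd
      · rename_i l r h
        have hlr := Γ.addAcyclic u l r h
        rw [Multiset.mem_add] at hd
        rw [Γ.ptDegs_add_eq h, Multiset.mem_add]
        rcases hd with hd | hd
        · exact Or.inl (ih l hlr.1 d hd e he)
        · exact Or.inr (ih r hlr.2 d hd e he)
      · rename_i l r h
        have hlr := Γ.mulAcyclic u l r h
        simp only [Multiset.mem_map, show ∀ (s t : Multiset (Fin n → ℕ)), s.product t = s ×ˢ t from fun _ _ => rfl, Multiset.mem_product] at hd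
        obtain ⟨⟨p, q⟩, ⟨hp, hq⟩, rfl⟩ := hd
        have hq' := ih r hlr.2 q hq e he
        rw [Γ.ptDegs_mul_eq h]
        simp only [Multiset.mem_map, show ∀ (s t : Multiset (Fin n → ℕ)), s.product t = s ×ˢ t from fun _ _ => rfl, Multiset.mem_product]
        exact ⟨(p, q + e), ⟨hp, hq'⟩, (add_assoc p q e).symm⟩

theorem Circuit.varQ_add_varV_le_varV
    {F : Type} [Field F] {n : ℕ} (Γ : Circuit F n) (u w : ℕ)
    (h : Γ.sptDegs u w ≠ 0) :
    ∀ i : Fin n, Γ.varQ u w i + Γ.varV w i ≤ Γ.varV u i := by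
  intro i
  have h1 : ((Γ.sptDegs u w).map (fun d => d i)) ≠ 0 := by
    simpa [Multiset.map_eq_zero] using h
  have h2 : ((Γ.ptDegs w).map (fun d => d i)) ≠ 0 := by
    simpa [Multiset.map_eq_zero] using Γ.ptDegs_ne_zero w
  obtain ⟨a, ha, hsa⟩ := Multiset.exists_eq_sup _ h1
  obtain ⟨b, hb, hsb⟩ := Multiset.exists_eq_sup _ h2
  simp only [Multiset.mem_map] at ha hb
  obtain ⟨d, hd, rfl⟩ := ha
  obtain ⟨e, he, rfl⟩ := hb
  have hmem := Γ.add_mem_ptDegs w u d hd e he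
  unfold Circuit.varQ Circuit.varV
  rw [hsa, hsb]
  exact Multiset.le_sup (Multiset.mem_map.2 ⟨d + e, hmem, rfl⟩)
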